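/- Let δ ≥ 0 and 1 < p⁻ ≤ p⁺ < ∞. There exists a constant c ≥ 1, depending only on p⁻, p⁺ and δ, such that for every exponent p ∈ [p⁻, p⁺], every shift a ≥ 0 and every r ≥ 0 one has c⁻¹ (δ + a + r)^{p−2} r² ≤ (φ_p)_a(r) ≤ c (δ + a + r)^{p−2} r². -/

import Mathlib

open MeasureTheory Set intervalIntegral Real

/-- Pointwise: if `0 < x ≤ y ≤ 2x` and `p ≤ 2`, then `x^(p-2) ≤ 2^(2-p) * y^(p-2)`. -/
lemma aux_two_sub {x y p : ℝ} (hx : 0 < x) (h1 : x ≤ y) (h2 : y ≤ 2 * x) (hp : p ≤ 2) :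
    x ^ (p - 2) ≤ 2 ^ (2 - p) * y ^ (p - 2) := by
  have hy : 0 < y := lt_of_lt_of_le hx h1
  have h3 : (2 * x) ^ (p - 2) ≤ y ^ (p - 2) :=
    Real.rpow_le_rpow_of_nonpos hy h2 (by linarith)
  rw [Real.mul_rpow (by norm_num) hx.le] at h3
  have h4 := mul_le_mul_of_nonneg_left h3 (Real.rpow_pos_of_pos two_pos (2 - p)).le
  rwa [← mul_assoc, ← Real.rpow_add two_pos, show 2 - p + (p - 2) = 0 by ring,
    Real.rpow_zero, one_mul] at h4

/-- Integrability of the integrand when the shift is positive. -/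
lemma aux_integrable {b p : ℝ} (hb : 0 < b) {u v : ℝ} (hu : 0 ≤ u) (hv : 0 ≤ v) :
    IntervalIntegrable (fun s => (b + s) ^ (p - 2) * s) volume u v := by
  apply ContinuousOn.intervalIntegrable
  apply ContinuousOn.mul _ continuousOn_id
  apply ContinuousOn.rpow_const (by fun_prop)
  intro x hx
  have hx0 : 0 ≤ x := le_trans (le_min hu hv) hx.1
  exact Or.inl (by positivity)

/-- Lower pointwise bound on the second half interval. -/
lemma aux_lower_pt {b p pp r s : ℝ} (hb : 0 < b) (hp2 : p ≤ pp) (hpp : 0 ≤ pp)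
    (hs1 : r / 2 ≤ s) (hs2 : s ≤ r) (hr : 0 ≤ r) :
    2 ^ (-pp) * (b + r) ^ (p - 2) ≤ (b + s) ^ (p - 2) := by
  have hbs : 0 < b + s := by linarith
  have hbr : 0 < b + r := by linarith
  rcases le_total p 2 with hp | hp
  · have h1 : (b + r) ^ (p - 2) ≤ (b + s) ^ (p - 2) :=
      Real.rpow_le_rpow_of_nonpos hbs (by linarith) (by linarith)
    have h2 : (2:ℝ) ^ (-pp) ≤ 1 := by
      rw [← Real.rpow_zero 2]
      exact Real.rpow_le_rpow_of_exponent_le one_le_two (by linarith)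
    calc 2 ^ (-pp) * (b + r) ^ (p - 2) ≤ 1 * (b + r) ^ (p - 2) :=
          mul_le_mul_of_nonneg_right h2 (Real.rpow_nonneg hbr.le _)
      _ = (b + r) ^ (p - 2) := one_mul _
      _ ≤ (b + s) ^ (p - 2) := h1
  · have h1 : (b + r) / 2 ≤ b + s := by linarith
    have h2 : ((b + r) / 2) ^ (p - 2) ≤ (b + s) ^ (p - 2) :=
      Real.rpow_le_rpow (by positivity) h1 (by linarith)
    have h3 : ((b + r) / 2) ^ (p - 2) = (b + r) ^ (p - 2) / 2 ^ (p - 2) :=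
      Real.div_rpow hbr.le (le_of_lt two_pos) (p - 2)
    have h4 : (2:ℝ) ^ (p - 2) ≤ 2 ^ pp :=
      Real.rpow_le_rpow_of_exponent_le one_le_two (by linarith)
    have h5 : (b + r) ^ (p - 2) / 2 ^ pp ≤ (b + r) ^ (p - 2) / 2 ^ (p - 2) :=
      div_le_div_of_nonneg_left (Real.rpow_nonneg hbr.le _)
        (Real.rpow_pos_of_pos two_pos _) h4
    calc 2 ^ (-pp) * (b + r) ^ (p - 2)
        = (b + r) ^ (p - 2) / 2 ^ pp := by
          rw [Real.rpow_neg (by norm_num), div_eq_mul_inv, mul_comm]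
      _ ≤ (b + r) ^ (p - 2) / 2 ^ (p - 2) := h5
      _ = ((b + r) / 2) ^ (p - 2) := h3.symm
      _ ≤ (b + s) ^ (p - 2) := h2

/-- The shifted N-function `(φ_p)_a(r) = ∫₀^r (δ+a+s)^{p-2} s ds`. -/
noncomputable def phiShift (δ p a r : ℝ) : ℝ :=
  ∫ s in (0:ℝ)..r, (δ + a + s) ^ (p - 2) * s

set_option maxHeartbeats 1000000 in
theorem stmt0 (δ pm pp : ℝ) (hδ : 0 ≤ δ) (hpm : 1 < pm) (hpmpp : pm ≤ pp) :
    ∃ c : ℝ, 1 ≤ c ∧ ∀ p : ℝ, pm ≤ p → p ≤ pp → ∀ a : ℝ, 0 ≤ a → ∀ r : ℝ, 0 ≤ r →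
      c⁻¹ * ((δ + a + r) ^ (p - 2) * r ^ 2) ≤ phiShift δ p a r ∧
      phiShift δ p a r ≤ c * ((δ + a + r) ^ (p - 2) * r ^ 2) := by
  have hpp1 : 1 < pp := lt_of_lt_of_le hpm hpmpp
  have hpp0 : (0:ℝ) ≤ pp := by linarith
  have h2pp : (1:ℝ) ≤ 2 ^ pp := by
    rw [← Real.rpow_zero 2]
    exact Real.rpow_le_rpow_of_exponent_le one_le_two hpp0
  have h2pm : (0:ℝ) < 2 ^ (2 - pm) := Real.rpow_pos_of_pos two_pos _
  refine ⟨3 * 2 ^ pp + 2 ^ (2 - pm) + pp, by nlinarith, ?_⟩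
  intro p hp1 hp2 a ha r hr
  set c := 3 * (2:ℝ) ^ pp + 2 ^ (2 - pm) + pp with hc_def
  have hc1 : (1:ℝ) ≤ c := by nlinarith
  have hc0 : (0:ℝ) < c := by linarith
  have hp0 : (0:ℝ) < p := by linarith
  set b := δ + a with hbdef
  have hb0 : 0 ≤ b := by rw [hbdef]; linarith
  rcases eq_or_lt_of_le hr with hr0 | hr0
  · rw [← hr0]
    have : phiShift δ p a 0 = 0 := by
      simp [phiShift]
    rw [this]
    norm_num
  have hX0 : 0 ≤ (b + r) ^ (p - 2) * r ^ 2 := by positivity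
  rcases eq_or_lt_of_le hb0 with hb | hb
  · -- δ + a = 0
    have hδa : b = 0 := hb.symm
    have hφ : phiShift δ p a r = r ^ p / p := by
      have hcong : Set.EqOn (fun s => (δ + a + s) ^ (p - 2) * s)
          (fun s => s ^ (p - 1)) (Set.uIcc 0 r) := by
        intro s hs
        rw [Set.uIcc_of_le hr] at hs
        simp only
        rw [← hbdef, hδa, zero_add]
        rcases eq_or_lt_of_le hs.1 with h0 | h0
        · rw [← h0]
          simp [Real.zero_rpow (show p - 1 ≠ 0 by linarith)]
        · have : s ^ (p - 2) * s = s ^ (p - 2 + 1) := by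
            rw [Real.rpow_add h0, Real.rpow_one]
          rw [this, show p - 2 + 1 = p - 1 by ring]
      rw [phiShift, intervalIntegral.integral_congr hcong,
        integral_rpow (Or.inl (by linarith : (-1:ℝ) < p - 1)),
        Real.zero_rpow (show p - 1 + 1 ≠ 0 by linarith),
        show p - 1 + 1 = p by ring]
      ring
    have hXp : (b + r) ^ (p - 2) * r ^ 2 = r ^ p := by
      rw [hδa, zero_add, ← Real.rpow_natCast r 2, ← Real.rpow_add hr0]
      norm_num
    rw [hφ, hXp]
    have hrp : (0:ℝ) ≤ r ^ p := Real.rpow_nonneg hr p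
    constructor
    · have hcp : p ≤ c := by nlinarith
      have h1 : c⁻¹ ≤ p⁻¹ := inv_anti₀ hp0 hcp
      calc c⁻¹ * r ^ p ≤ p⁻¹ * r ^ p := mul_le_mul_of_nonneg_right h1 hrp
        _ = r ^ p / p := by rw [inv_mul_eq_div]
    · have h1 : r ^ p / p ≤ r ^ p := div_le_self hrp (by linarith)
      have h2 : r ^ p ≤ c * r ^ p := le_mul_of_one_le_left hrp hc1
      exact le_trans h1 h2
  · -- 0 < b
    have hφdef : phiShift δ p a r = ∫ s in (0:ℝ)..r, (b + s) ^ (p - 2) * s := by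
      rw [phiShift, hbdef]
    have hi1 : IntervalIntegrable (fun s => (b + s) ^ (p - 2) * s) volume 0 (r / 2) :=
      aux_integrable hb le_rfl (by linarith)
    have hi2 : IntervalIntegrable (fun s => (b + s) ^ (p - 2) * s) volume (r / 2) r :=
      aux_integrable hb (by linarith) hr
    have hi3 : IntervalIntegrable (fun s => (b + s) ^ (p - 2) * s) volume 0 r :=
      aux_integrable hb le_rfl hr
    constructor
    · -- lower bound
      have hsplit := intervalIntegral.integral_add_adjacent_intervals hi1 hi2
      have h1 : 0 ≤ ∫ s in (0:ℝ)..(r / 2), (b + s) ^ (p - 2) * s :=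
        intervalIntegral.integral_nonneg (by linarith)
          (fun u hu => mul_nonneg (Real.rpow_nonneg (by linarith [hu.1]) _) hu.1)
      have h2 : ∫ s in (r / 2)..r, (2 ^ (-pp) * (b + r) ^ (p - 2)) * s ≤
          ∫ s in (r / 2)..r, (b + s) ^ (p - 2) * s := by
        apply intervalIntegral.integral_mono_on (by linarith)
          ((continuous_const.mul continuous_id).intervalIntegrable _ _) hi2
        intro s hs
        exact mul_le_mul_of_nonneg_right
          (aux_lower_pt hb hp2 hpp0 hs.1 hs.2 hr) (show (0:ℝ) ≤ s by linarith [hs.1])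
      have h3 : ∫ s in (r / 2)..r, (2 ^ (-pp) * (b + r) ^ (p - 2)) * s =
          (2 ^ (-pp) * (b + r) ^ (p - 2)) * (3 / 8 * r ^ 2) := by
        rw [intervalIntegral.integral_const_mul, integral_id]
        ring
      have hlow : 2 ^ (-pp) * (3 / 8) * ((b + r) ^ (p - 2) * r ^ 2) ≤ phiShift δ p a r := by
        rw [hφdef, ← hsplit]
        nlinarith [h2, h3, h1]
      have h83 : (8 / 3 : ℝ) * 2 ^ pp ≤ c := by nlinarith
      have hcinv : c⁻¹ ≤ 2 ^ (-pp) * (3 / 8) := by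
        have h4 : c⁻¹ ≤ ((8 / 3 : ℝ) * 2 ^ pp)⁻¹ :=
          inv_anti₀ (by nlinarith) h83
        have h5 : ((8 / 3 : ℝ) * 2 ^ pp)⁻¹ = 2 ^ (-pp) * (3 / 8) := by
          rw [Real.rpow_neg (by norm_num), mul_inv]
          ring
        linarith [h4, h5.le]
      calc c⁻¹ * ((b + r) ^ (p - 2) * r ^ 2)
          ≤ (2 ^ (-pp) * (3 / 8)) * ((b + r) ^ (p - 2) * r ^ 2) :=
            mul_le_mul_of_nonneg_right hcinv hX0
        _ ≤ phiShift δ p a r := hlow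
    · -- upper bound
      rcases le_total 2 p with hp2' | hp2'
      · -- 2 ≤ p
        have hup : phiShift δ p a r ≤ (b + r) ^ (p - 2) * ((r ^ 2 - 0 ^ 2) / 2) := by
          rw [hφdef, ← integral_id, ← intervalIntegral.integral_const_mul]
          apply intervalIntegral.integral_mono_on hr hi3
            ((continuous_const.mul continuous_id).intervalIntegrable _ _)
          intro s hs
          exact mul_le_mul_of_nonneg_right
            (Real.rpow_le_rpow (by linarith [hs.1]) (by linarith [hs.2]) (by linarith)) hs.1
        have hfin : (b + r) ^ (p - 2) * ((r ^ 2 - 0 ^ 2) / 2) ≤ c * ((b + r) ^ (p - 2) * r ^ 2) := by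
          have h12 : (1 / 2 : ℝ) ≤ c := by linarith
          calc (b + r) ^ (p - 2) * ((r ^ 2 - 0 ^ 2) / 2)
              = (1 / 2) * ((b + r) ^ (p - 2) * r ^ 2) := by ring
            _ ≤ c * ((b + r) ^ (p - 2) * r ^ 2) := mul_le_mul_of_nonneg_right h12 hX0
        exact le_trans hup hfin
      · -- p ≤ 2
        have h2p : (2:ℝ) ^ (2 - p) ≤ 2 ^ (2 - pm) :=
          Real.rpow_le_rpow_of_exponent_le one_le_two (by linarith)
        have h2p0 : (0:ℝ) < 2 ^ (2 - p) := Real.rpow_pos_of_pos two_pos _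
        have hcc : (2:ℝ) ^ (2 - pm) ≤ c := by linarith
        rcases le_total b r with hbr | hbr
        · -- b ≤ r
          have hup : phiShift δ p a r ≤ ∫ s in (0:ℝ)..r, s ^ (p - 1) := by
            rw [hφdef]
            have hig : IntervalIntegrable (fun s : ℝ => s ^ (p - 1)) volume 0 r :=
              intervalIntegral.intervalIntegrable_rpow' (by linarith)
            apply intervalIntegral.integral_mono_on hr hi3 hig
            intro s hs
            rcases eq_or_lt_of_le hs.1 with h0 | h0
            · rw [← h0]
              simp [Real.zero_rpow (show p - 1 ≠ 0 by linarith)]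
            · have hb1 : (b + s) ^ (p - 2) ≤ s ^ (p - 2) :=
                Real.rpow_le_rpow_of_nonpos h0 (by linarith) (by linarith)
              calc (b + s) ^ (p - 2) * s ≤ s ^ (p - 2) * s :=
                    mul_le_mul_of_nonneg_right hb1 h0.le
                _ = s ^ (p - 1) := by
                    rw [show s ^ (p - 2) * s = s ^ (p - 2 + 1) by
                      rw [Real.rpow_add h0, Real.rpow_one], show p - 2 + 1 = p - 1 by ring]
          have hval : ∫ s in (0:ℝ)..r, s ^ (p - 1) = r ^ p / p := by
            rw [integral_rpow (Or.inl (by linarith : (-1:ℝ) < p - 1)),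
              Real.zero_rpow (show p - 1 + 1 ≠ 0 by linarith), show p - 1 + 1 = p by ring]
            ring
          have hkey : r ^ (p - 2) ≤ 2 ^ (2 - p) * (b + r) ^ (p - 2) :=
            aux_two_sub hr0 (by linarith) (by linarith) hp2'
          have hrp2 : r ^ (p - 2) * r ^ 2 = r ^ p := by
            rw [← Real.rpow_natCast r 2, ← Real.rpow_add hr0]
            norm_num
          have h6 : r ^ p ≤ 2 ^ (2 - p) * ((b + r) ^ (p - 2) * r ^ 2) := by
            rw [← hrp2]
            have := mul_le_mul_of_nonneg_right hkey (sq_nonneg r)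
            calc r ^ (p - 2) * r ^ 2 ≤ 2 ^ (2 - p) * (b + r) ^ (p - 2) * r ^ 2 := this
              _ = 2 ^ (2 - p) * ((b + r) ^ (p - 2) * r ^ 2) := by ring
          have h7 : 2 ^ (2 - p) * ((b + r) ^ (p - 2) * r ^ 2) ≤
              c * ((b + r) ^ (p - 2) * r ^ 2) :=
            mul_le_mul_of_nonneg_right (le_trans h2p hcc) hX0
          have h8 : r ^ p / p ≤ r ^ p := div_le_self (Real.rpow_nonneg hr p) (by linarith)
          linarith [hup, hval.le]
        · -- r ≤ b
          have hup : phiShift δ p a r ≤ b ^ (p - 2) * ((r ^ 2 - 0 ^ 2) / 2) := by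
            rw [hφdef, ← integral_id, ← intervalIntegral.integral_const_mul]
            apply intervalIntegral.integral_mono_on hr hi3
              ((continuous_const.mul continuous_id).intervalIntegrable _ _)
            intro s hs
            exact mul_le_mul_of_nonneg_right
              (Real.rpow_le_rpow_of_nonpos hb (by linarith [hs.1]) (by linarith)) hs.1
          have hkey : b ^ (p - 2) ≤ 2 ^ (2 - p) * (b + r) ^ (p - 2) :=
            aux_two_sub hb (by linarith) (by linarith) hp2'
          have h6 : b ^ (p - 2) * ((r ^ 2 - 0 ^ 2) / 2) ≤
              2 ^ (2 - p) * ((b + r) ^ (p - 2) * r ^ 2) := by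
            have h61 := mul_le_mul_of_nonneg_right hkey (sq_nonneg r)
            have hM1 : 0 ≤ b ^ (p - 2) * r ^ 2 :=
              mul_nonneg (Real.rpow_nonneg hb0 _) (sq_nonneg r)
            nlinarith [h61, hM1]
          have h7 : 2 ^ (2 - p) * ((b + r) ^ (p - 2) * r ^ 2) ≤
              c * ((b + r) ^ (p - 2) * r ^ 2) :=
            mul_le_mul_of_nonneg_right (le_trans h2p hcc) hX0
          linarith
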